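/- Let u be a C² function on the closure of Q solving the heat problem, and let u_h be a C¹ function on the closure of Q vanishing on Σ and satisfying the initial condition exactly, u_h(·,0) = u0 = u(·,0) on Σ0; set e := u − u_h. For β > 0 define the advanced majorant evaluated at the exact data (η = u − u_h, y = ∇x u): M̄ᴵᴵ(u_h,u) := ‖u − u_h‖²_{Σ_T} + 2·F(u_h, u − u_h) + 4·(1+β)·‖∇x(u − u_h)‖²_Q, where F(v,η) := (∇x v, ∇x η)_Q + (∂t v − f, η)_Q. Then M̄ᴵᴵ(u_h,u) = (4·(1+β) − 2)·‖∇x e‖²_Q, and consequently ‖∇x e‖²_Q ≤ M̄ᴵᴵ(u_h,u) ≤ (4·(1+β) − 2)·‖∇x e‖²_Q. -/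

import Mathlib

open MeasureTheory Set
open scoped RealInnerProductSpace

noncomputable section

/-- Spatial gradient of a scalar space-time function. -/
def gradX {d : ℕ} (u : EuclideanSpace ℝ (Fin d) → ℝ → ℝ)
    (x : EuclideanSpace ℝ (Fin d)) (t : ℝ) : EuclideanSpace ℝ (Fin d) :=
  gradient (fun x' => u x' t) x

/-- Time derivative of a scalar space-time function. -/
def dT {d : ℕ} (u : EuclideanSpace ℝ (Fin d) → ℝ → ℝ)
    (x : EuclideanSpace ℝ (Fin d)) (t : ℝ) : ℝ :=
  deriv (fun s => u x s) t

/-- Time derivative of a vector-valued space-time function. -/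
def dTvec {d : ℕ} (y : EuclideanSpace ℝ (Fin d) → ℝ → EuclideanSpace ℝ (Fin d))
    (x : EuclideanSpace ℝ (Fin d)) (t : ℝ) : EuclideanSpace ℝ (Fin d) :=
  deriv (fun s => y x s) t

/-- Spatial divergence of a vector field on space-time. -/
def divX {d : ℕ} (y : EuclideanSpace ℝ (Fin d) → ℝ → EuclideanSpace ℝ (Fin d))
    (x : EuclideanSpace ℝ (Fin d)) (t : ℝ) : ℝ :=
  ∑ i, fderiv ℝ (fun x' => y x' t i) x (EuclideanSpace.single i 1)

/-- Spatial Laplacian. -/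
def lapX {d : ℕ} (u : EuclideanSpace ℝ (Fin d) → ℝ → ℝ) :
    EuclideanSpace ℝ (Fin d) → ℝ → ℝ :=
  divX (gradX u)

/-- Squared L²(Q)-norm of a scalar function, Q = Ω × (0,T). -/
def normQsq {d : ℕ} (Ω : Set (EuclideanSpace ℝ (Fin d))) (T : ℝ)
    (w : EuclideanSpace ℝ (Fin d) → ℝ → ℝ) : ℝ :=
  ∫ x in Ω, ∫ t in Ioo (0:ℝ) T, (w x t) ^ 2

/-- Squared L²(Q)-norm of a vector field. -/
def normQsqVec {d : ℕ} (Ω : Set (EuclideanSpace ℝ (Fin d))) (T : ℝ)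
    (y : EuclideanSpace ℝ (Fin d) → ℝ → EuclideanSpace ℝ (Fin d)) : ℝ :=
  ∫ x in Ω, ∫ t in Ioo (0:ℝ) T, ‖y x t‖ ^ 2

/-- Squared L²(Σ_T)-norm (top face t = T) of a scalar function. -/
def normSTsq {d : ℕ} (Ω : Set (EuclideanSpace ℝ (Fin d))) (T : ℝ)
    (w : EuclideanSpace ℝ (Fin d) → ℝ → ℝ) : ℝ :=
  ∫ x in Ω, (w x T) ^ 2

/-- Squared L²(Σ_T)-norm (top face t = T) of a vector field. -/
def normSTsqVec {d : ℕ} (Ω : Set (EuclideanSpace ℝ (Fin d))) (T : ℝ)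
    (y : EuclideanSpace ℝ (Fin d) → ℝ → EuclideanSpace ℝ (Fin d)) : ℝ :=
  ∫ x in Ω, ‖y x T‖ ^ 2

/-- L²(Q) inner product of scalar functions. -/
def innQ {d : ℕ} (Ω : Set (EuclideanSpace ℝ (Fin d))) (T : ℝ)
    (v w : EuclideanSpace ℝ (Fin d) → ℝ → ℝ) : ℝ :=
  ∫ x in Ω, ∫ t in Ioo (0:ℝ) T, v x t * w x t

/-- L²(Q) inner product of vector fields. -/
def innQvec {d : ℕ} (Ω : Set (EuclideanSpace ℝ (Fin d))) (T : ℝ)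
    (y z : EuclideanSpace ℝ (Fin d) → ℝ → EuclideanSpace ℝ (Fin d)) : ℝ :=
  ∫ x in Ω, ∫ t in Ioo (0:ℝ) T, (inner ℝ (y x t) (z x t) : ℝ)

/-- Flux residual `R_d(v,y) = y - ∇x v`. -/
def Rd {d : ℕ} (v : EuclideanSpace ℝ (Fin d) → ℝ → ℝ)
    (y : EuclideanSpace ℝ (Fin d) → ℝ → EuclideanSpace ℝ (Fin d)) :
    EuclideanSpace ℝ (Fin d) → ℝ → EuclideanSpace ℝ (Fin d) :=
  fun x t => y x t - gradX v x t

/-- Equation residual `R_eq(v,y) = f - ∂t v + divx y`. -/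
def Req {d : ℕ} (f v : EuclideanSpace ℝ (Fin d) → ℝ → ℝ)
    (y : EuclideanSpace ℝ (Fin d) → ℝ → EuclideanSpace ℝ (Fin d)) :
    EuclideanSpace ℝ (Fin d) → ℝ → ℝ :=
  fun x t => f x t - dT v x t + divX y x t

/-- The majorant `M̄ᴵ(v,y;β)`. -/
def MajI {d : ℕ} (Ω : Set (EuclideanSpace ℝ (Fin d))) (T C_F : ℝ)
    (f v : EuclideanSpace ℝ (Fin d) → ℝ → ℝ)
    (y : EuclideanSpace ℝ (Fin d) → ℝ → EuclideanSpace ℝ (Fin d)) (β : ℝ) : ℝ :=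
  (1 + β) * normQsqVec Ω T (Rd v y) + (1 + 1/β) * C_F ^ 2 * normQsq Ω T (Req f v y)

/-- Scalar function that is (the restriction of) a globally smooth function on space-time. -/
def SmoothFn {d : ℕ} (u : EuclideanSpace ℝ (Fin d) → ℝ → ℝ) : Prop :=
  ContDiff ℝ (⊤ : ℕ∞) (fun p : EuclideanSpace ℝ (Fin d) × ℝ => u p.1 p.2)

/-- Vector field that is (the restriction of) a globally smooth function on space-time. -/
def SmoothVec {d : ℕ} (y : EuclideanSpace ℝ (Fin d) → ℝ → EuclideanSpace ℝ (Fin d)) : Prop :=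
  ContDiff ℝ (⊤ : ℕ∞) (fun p : EuclideanSpace ℝ (Fin d) × ℝ => y p.1 p.2)


/-- The advanced majorant evaluated at the exact data `η = u - u_h`, `y = ∇x u`. -/
def MajIIexact {d : ℕ} (Ω : Set (EuclideanSpace ℝ (Fin d))) (T : ℝ)
    (f u_h u : EuclideanSpace ℝ (Fin d) → ℝ → ℝ) (β : ℝ) : ℝ :=
  normSTsq Ω T (fun x t => u x t - u_h x t)
    + 2 * (innQvec Ω T (gradX u_h) (gradX (fun x t => u x t - u_h x t))
            + innQ Ω T (fun x t => dT u_h x t - f x t) (fun x t => u x t - u_h x t))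
    + 4 * (1 + β) * normQsqVec Ω T (gradX (fun x t => u x t - u_h x t))


section auxiliaryLemmas
open Bornology

lemma integrableOn_of_bounded_cont {X : Type*} [MeasureSpace X] [PseudoMetricSpace X]
    [BorelSpace X] [ProperSpace X] [T2Space X]
    [IsFiniteMeasureOnCompacts (volume : Measure X)]
    {s : Set X} (hs : IsBounded s) {g : X → ℝ} (hg : Continuous g) :
    IntegrableOn g s volume :=
  (hg.continuousOn.integrableOn_compact hs.isCompact_closure).mono_set subset_closure

lemma integral_deriv_open_eq_zero {S : Set ℝ} (hS : IsOpen S) (hSb : IsBounded S)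
    {h : ℝ → ℝ} (hh : ContDiff ℝ 1 h) (h0 : ∀ s ∈ frontier S, h s = 0) :
    ∫ s in S, deriv h s = 0 := by
  classical
  set 𝒞 : Set (Set ℝ) := connectedComponentIn S '' S with h𝒞
  have hCsub : ∀ C ∈ 𝒞, C ⊆ S := by
    rintro C ⟨x, hx, rfl⟩; exact connectedComponentIn_subset S x
  -- each component is an open interval with endpoints in the frontier
  have hkey : ∀ C ∈ 𝒞, ∃ a b : ℝ, a < b ∧ C = Ioo a b ∧ a ∈ frontier S ∧ b ∈ frontier S := by
    rintro C ⟨x, hx, rfl⟩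
    set C := connectedComponentIn S x with hC
    have hCo : IsOpen C := hS.connectedComponentIn
    have hxC : x ∈ C := mem_connectedComponentIn hx
    have hsub : C ⊆ S := connectedComponentIn_subset S x
    have hCb : IsBounded C := hSb.subset hsub
    have hbdd : BddAbove C := hCb.bddAbove
    have hbdd' : BddBelow C := hCb.bddBelow
    set a := sInf C with ha
    set b := sSup C with hb
    have hpre : IsPreconnected C := isPreconnected_connectedComponentIn
    have hord : OrdConnected C := hpre.ordConnected
    have hIoo : C = Ioo a b := by
      apply Subset.antisymm
      · intro c hc
        obtain ⟨ε, hε, hball⟩ := Metric.isOpen_iff.1 hCo c hc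
        have hl : c - ε / 2 ∈ C := by
          apply hball
          rw [Metric.mem_ball, Real.dist_eq, show c - ε/2 - c = -(ε/2) by ring, abs_neg,
            abs_of_pos (by linarith)]
          linarith
        have hr : c + ε / 2 ∈ C := by
          apply hball
          rw [Metric.mem_ball, Real.dist_eq, show c + ε/2 - c = ε/2 by ring,
            abs_of_pos (by linarith)]
          linarith
        constructor
        · exact lt_of_le_of_lt (csInf_le hbdd' hl) (by linarith)
        · exact lt_of_lt_of_le (by linarith) (le_csSup hbdd hr)
      · intro z hz
        obtain ⟨c₁, hc₁C, hc₁⟩ := exists_lt_of_csInf_lt ⟨x, hxC⟩ hz.1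
        obtain ⟨c₂, hc₂C, hc₂⟩ := exists_lt_of_lt_csSup ⟨x, hxC⟩ hz.2
        exact hord.out hc₁C hc₂C ⟨hc₁.le, hc₂.le⟩
    have hab : a < b := by
      have := hIoo ▸ hxC; exact lt_trans this.1 this.2
    have hclos : closure C ⊆ closure S := closure_mono hsub
    have hfr : ∀ y : ℝ, y ∈ closure C → y ∉ C → y ∈ frontier S := by
      intro y hyc hyn
      constructor
      · exact hclos hyc
      · rw [hS.interior_eq]
        intro hyS
        obtain ⟨ε, hε, hball⟩ := Metric.isOpen_iff.1 hS.connectedComponentIn y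
          (mem_connectedComponentIn hyS)
        obtain ⟨w, hw⟩ := Metric.mem_closure_iff.1 hyc ε hε
        have hwC : w ∈ C := hw.1
        have hwball : w ∈ Metric.ball y ε := by
          rw [Metric.mem_ball, dist_comm]; exact hw.2
        have h1 : connectedComponentIn S y = connectedComponentIn S w :=
          connectedComponentIn_eq (hball hwball)
        have h2 : C = connectedComponentIn S w := connectedComponentIn_eq hwC
        have : y ∈ C := by
          rw [h2, ← h1]; exact mem_connectedComponentIn hyS
        exact hyn this
    refine ⟨a, b, hab, hIoo, ?_, ?_⟩
    · apply hfr a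
      · rw [hIoo, closure_Ioo hab.ne]; exact ⟨le_refl a, hab.le⟩
      · rw [hIoo]; simp
    · apply hfr b
      · rw [hIoo, closure_Ioo hab.ne]; exact ⟨hab.le, le_refl b⟩
      · rw [hIoo]; simp
  -- countability
  have hcount : 𝒞.Countable := by
    have hsubr : 𝒞 ⊆ Set.range (fun q : ℚ => connectedComponentIn S (q : ℝ)) := by
      rintro C hC
      obtain ⟨a, b, hab, hCI, _, _⟩ := hkey C hC
      obtain ⟨x, hx, rfl⟩ := hC
      obtain ⟨q, hq1, hq2⟩ := exists_rat_btwn hab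
      have hqC : (q : ℝ) ∈ connectedComponentIn S x := by rw [hCI]; exact ⟨hq1, hq2⟩
      exact ⟨q, (connectedComponentIn_eq hqC).symm⟩
    exact (Set.countable_range _).mono hsubr
  have hcnt : Countable ↥𝒞 := hcount.to_subtype
  have hSU : S = ⋃ C : ↥𝒞, (C : Set ℝ) := by
    apply Subset.antisymm
    · intro x hx
      exact Set.mem_iUnion.2 ⟨⟨_, ⟨x, hx, rfl⟩⟩, mem_connectedComponentIn hx⟩
    · intro x hx
      obtain ⟨C, hC⟩ := Set.mem_iUnion.1 hx
      exact hCsub C.1 C.2 hC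
  have hmeas : ∀ C : ↥𝒞, MeasurableSet (C : Set ℝ) := by
    rintro ⟨C, hC⟩
    obtain ⟨a, b, hab, hCI, _, _⟩ := hkey C hC
    simp only [hCI]; exact measurableSet_Ioo
  have hdisj : Pairwise (Function.onFun Disjoint fun C : ↥𝒞 => (C : Set ℝ)) := by
    rintro ⟨C₁, hC₁⟩ ⟨C₂, hC₂⟩ hne
    simp only [Function.onFun]
    rw [Set.disjoint_left]
    intro z hz1 hz2
    obtain ⟨x₁, hx₁, rfl⟩ := hC₁
    obtain ⟨x₂, hx₂, rfl⟩ := hC₂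
    exact hne (by
      apply Subtype.ext
      simp only
      rw [connectedComponentIn_eq hz1, connectedComponentIn_eq hz2])
  have hint : IntegrableOn (deriv h) S volume :=
    integrableOn_of_bounded_cont hSb (hh.continuous_deriv le_rfl)
  rw [hSU]
  rw [integral_iUnion hmeas hdisj (hSU ▸ hint)]
  have hzero : ∀ C : ↥𝒞, ∫ s in (C : Set ℝ), deriv h s = 0 := by
    rintro ⟨C, hC⟩
    obtain ⟨a, b, hab, hCI, haf, hbf⟩ := hkey C hC
    simp only [hCI]
    rw [← integral_Ioc_eq_integral_Ioo, ← intervalIntegral.integral_of_le hab.le]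
    rw [intervalIntegral.integral_deriv_eq_sub
      (fun x _ => (hh.differentiable one_ne_zero).differentiableAt)
      ((hh.continuous_deriv le_rfl).intervalIntegrable _ _)]
    rw [h0 a haf, h0 b hbf, sub_zero]
  simp only [hzero, tsum_zero]


lemma euclid_abs_coord_le_norm {n : ℕ} (v : EuclideanSpace ℝ (Fin n)) (i : Fin n) :
    |v i| ≤ ‖v‖ := by
  rw [EuclideanSpace.norm_eq, show |v i| = Real.sqrt ((v i)^2) by rw [Real.sqrt_sq_eq_abs]]
  apply Real.sqrt_le_sqrt
  have := Finset.single_le_sum (f := fun j => ‖v j‖^2) (fun j _ => sq_nonneg _)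
    (Finset.mem_univ i)
  simpa [Real.norm_eq_abs, sq_abs] using this

lemma integral_div_sum_eq_zero {d : ℕ} {Ω : Set (EuclideanSpace ℝ (Fin d))} (hΩ : IsOpen Ω)
    (hΩb : IsBounded Ω) {F : EuclideanSpace ℝ (Fin d) → EuclideanSpace ℝ (Fin d)}
    (hF : ContDiff ℝ 1 F) (hF0 : ∀ x ∈ frontier Ω, F x = 0) :
    ∫ x in Ω, (∑ i, fderiv ℝ (fun x' => F x' i) x (EuclideanSpace.single i 1)) = 0 := by
  rcases Nat.eq_zero_or_pos d with hd0 | hdpos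
  · subst hd0; simp
  obtain ⟨m, rfl⟩ : ∃ m, d = m + 1 := ⟨d - 1, by omega⟩
  classical
  have hFd : Differentiable ℝ F := hF.differentiable one_ne_zero
  have hcoord : ∀ (i : Fin (m+1)) (x : EuclideanSpace ℝ (Fin (m+1))),
      HasFDerivAt (fun x' => F x' i) ((EuclideanSpace.proj (𝕜 := ℝ) i).comp (fderiv ℝ F x)) x :=
    fun i x => (EuclideanSpace.proj (𝕜 := ℝ) i).hasFDerivAt.comp x (hFd x).hasFDerivAt
  set G : Fin (m+1) → EuclideanSpace ℝ (Fin (m+1)) → ℝ :=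
    fun i x => (fderiv ℝ F x (EuclideanSpace.single i 1)) i with hGdef
  have hGc : ∀ i, Continuous (G i) := fun i =>
    (PiLp.continuous_apply 2 (fun _ : Fin (m+1) => ℝ) i).comp
      ((hF.continuous_fderiv one_ne_zero).clm_apply continuous_const)
  obtain ⟨R, hR⟩ := isBounded_iff_forall_norm_le.1 hΩb
  have h1 : (∫ x in Ω, ∑ i, fderiv ℝ (fun x' => F x' i) x (EuclideanSpace.single i 1))
      = ∑ i, ∫ x in Ω, G i x := by
    rw [setIntegral_congr_fun hΩ.measurableSet
      (g := fun x => ∑ i, G i x)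
      (fun x _ => Finset.sum_congr rfl fun i _ => by rw [(hcoord i x).fderiv]; rfl)]
    exact integral_finset_sum _ (fun i _ => integrableOn_of_bounded_cont hΩb (hGc i))
  rw [h1]
  apply Finset.sum_eq_zero
  intro i _
  -- transport to ℝ × (Fin m → ℝ)
  set Φe := (MeasurableEquiv.toLp 2 (Fin (m+1) → ℝ)).symm with hΦe
  set Ψ := MeasurableEquiv.piFinSuccAbove (fun _ : Fin (m+1) => ℝ) i with hΨ
  set Φ := Φe.trans Ψ with hΦdef
  have hmp : MeasurePreserving (⇑Φ) volume volume :=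
    (volume_preserving_piFinSuccAbove (fun _ : Fin (m+1) => ℝ) i).comp
      (EuclideanSpace.volume_preserving_symm_measurableEquiv_toLp (Fin (m+1)))
  have hmps : MeasurePreserving (⇑Φ.symm) volume volume := MeasurePreserving.symm Φ hmp
  -- continuity of Φ.symm
  have hc1 : Continuous fun z : ℝ × (Fin m → ℝ) => (i.insertNth z.1 z.2 : Fin (m+1) → ℝ) := by
    apply continuous_pi
    intro j
    rcases eq_or_ne j i with rfl | hj
    · simpa using continuous_fst
    · obtain ⟨k, rfl⟩ := Fin.exists_succAbove_eq hj
      simpa [Fin.insertNth_apply_succAbove] using (by exact (continuous_apply k).comp continuous_snd : Continuous fun a : ℝ × (Fin m → ℝ) => a.2 k)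
  have hΦsc : Continuous (⇑Φ.symm) := by
    exact ((PiLp.continuousLinearEquiv 2 ℝ
      (fun _ : Fin (m+1) => ℝ)).symm.continuous).comp hc1
  set S' := ⇑Φ.symm ⁻¹' Ω with hS'def
  have hS'meas : MeasurableSet S' := hΩ.measurableSet.preimage Φ.symm.measurable
  have hΦfst : ∀ x : EuclideanSpace ℝ (Fin (m+1)), (Φ x).1 = x i := fun x => rfl
  have hΦsnd : ∀ (x : EuclideanSpace ℝ (Fin (m+1))) k, (Φ x).2 k = x (i.succAbove k) :=
    fun x k => rfl
  have hS'b : IsBounded S' := by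
    rw [isBounded_iff_forall_norm_le]
    refine ⟨max R 0, ?_⟩
    rintro ⟨aa, y⟩ hz
    have hx : Φ.symm (aa, y) ∈ Ω := hz
    set x := Φ.symm (aa, y) with hxdef
    have hxn : ‖x‖ ≤ R := hR _ hx
    have happ : Φ x = (aa, y) := Φ.apply_symm_apply _
    have h1 : aa = x i := by rw [← hΦfst x, happ]
    have h2 : ∀ k, y k = x (i.succAbove k) := fun k => by rw [← hΦsnd x k, happ]
    rw [Prod.norm_def]
    apply max_le
    · rw [Real.norm_eq_abs, h1]
      exact le_max_of_le_left ((euclid_abs_coord_le_norm x i).trans hxn)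
    · refine (pi_norm_le_iff_of_nonneg (le_max_right R 0)).2 fun k => ?_
      rw [Real.norm_eq_abs]
      show |y k| ≤ _
      rw [h2 k]
      exact le_max_of_le_left ((euclid_abs_coord_le_norm x _).trans hxn)
  set H : ℝ × (Fin m → ℝ) → ℝ := fun z => G i (Φ.symm z) with hHdef
  have hHc : Continuous H := (hGc i).comp hΦsc
  have hIntOn : IntegrableOn H S' volume := integrableOn_of_bounded_cont hS'b hHc
  have hInd : Integrable (S'.indicator H) volume :=
    (integrable_indicator_iff hS'meas).2 hIntOn
  have htrans : ∫ x in Ω, G i x = ∫ z in S', H z :=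
    (hmps.setIntegral_preimage_emb (MeasurableEquiv.measurableEmbedding _) (G i) Ω).symm
  rw [htrans, ← integral_indicator hS'meas]
  have hfub : ∫ z, S'.indicator H z = ∫ y, ∫ a, S'.indicator H (a, y) :=
    integral_prod_symm (S'.indicator H) hInd
  rw [hfub]
  have hinner : ∀ y : Fin m → ℝ, (∫ a, S'.indicator H (a, y)) = 0 := by
    intro y
    set σ : ℝ → EuclideanSpace ℝ (Fin (m+1)) := fun a => Φ.symm (a, y) with hσdef
    have hσc : Continuous σ := hΦsc.comp (continuous_id.prodMk continuous_const)
    set S1 : Set ℝ := σ ⁻¹' Ω with hS1def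
    have hS1o : IsOpen S1 := hΩ.preimage hσc
    have hS1meas : MeasurableSet S1 := hS1o.measurableSet
    have hS1b : IsBounded S1 := by
      rw [isBounded_iff_forall_norm_le]
      refine ⟨max R 0, fun a ha => ?_⟩
      have hx : σ a ∈ Ω := ha
      have h1 : a = (σ a) i := by rw [← hΦfst (σ a), Φ.apply_symm_apply]
      rw [Real.norm_eq_abs, h1]
      exact le_max_of_le_left ((euclid_abs_coord_le_norm (σ a) i).trans (hR _ hx))
    -- smoothness of σ
    have hins : ContDiff ℝ 1 fun a : ℝ => (i.insertNth a y : Fin (m+1) → ℝ) := by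
      apply contDiff_pi.2
      intro j
      rcases eq_or_ne j i with rfl | hj
      · simpa using (by exact contDiff_id : ContDiff ℝ 1 fun x : ℝ => x)
      · obtain ⟨k, rfl⟩ := Fin.exists_succAbove_eq hj
        simpa [Fin.insertNth_apply_succAbove] using contDiff_const
    have hσCD : ContDiff ℝ 1 σ := by
      exact (((PiLp.continuousLinearEquiv 2 ℝ
        (fun _ : Fin (m+1) => ℝ)).symm : (Fin (m+1) → ℝ) →L[ℝ]
          EuclideanSpace ℝ (Fin (m+1))).contDiff).comp hins
    set hy : ℝ → ℝ := fun a => F (σ a) i with hhydef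
    have hyCD : ContDiff ℝ 1 hy :=
      ((EuclideanSpace.proj (𝕜 := ℝ) i).contDiff.comp hF).comp hσCD
    -- derivative of σ
    have hσder : ∀ a : ℝ, HasDerivAt σ (EuclideanSpace.single i 1) a := by
      intro a
      have hpi : HasDerivAt (fun a : ℝ => (i.insertNth a y : Fin (m+1) → ℝ))
          (Pi.single i 1) a := by
        apply hasDerivAt_pi.2
        intro j
        rcases eq_or_ne j i with rfl | hj
        · simpa using hasDerivAt_id' a
        · obtain ⟨k, rfl⟩ := Fin.exists_succAbove_eq hj
          simpa [Fin.insertNth_apply_succAbove, Pi.single_eq_of_ne (Fin.succAbove_ne i k)]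
            using hasDerivAt_const a (y k)
      have := (((PiLp.continuousLinearEquiv 2 ℝ
        (fun _ : Fin (m+1) => ℝ)).symm : (Fin (m+1) → ℝ) →L[ℝ]
          EuclideanSpace ℝ (Fin (m+1))).hasFDerivAt).comp_hasDerivAt a hpi
      exact this
    have hyder : ∀ a : ℝ, deriv hy a = G i (σ a) := by
      intro a
      exact ((hcoord i (σ a)).comp_hasDerivAt a (hσder a)).deriv
    -- boundary vanishing
    have hfr : ∀ s ∈ frontier S1, hy s = 0 := by
      intro s hs
      have h1 : σ s ∈ frontier Ω := hσc.frontier_preimage_subset Ω hs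
      show F (σ s) i = 0
      rw [hF0 _ h1]
      rfl
    have hslice : ∀ a : ℝ, S'.indicator H (a, y) = S1.indicator (fun a => H (a, y)) a := by
      intro a
      simp only [Set.indicator_apply]
      rfl
    calc (∫ a, S'.indicator H (a, y))
        = ∫ a, S1.indicator (fun a => H (a, y)) a := by simp only [hslice]
      _ = ∫ a in S1, H (a, y) := integral_indicator hS1meas
      _ = ∫ a in S1, deriv hy a :=
          setIntegral_congr_fun hS1meas (fun a _ => (hyder a).symm)
      _ = 0 := integral_deriv_open_eq_zero hS1o hS1b hyCD hfr
  simp only [hinner, integral_zero]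


variable {d : ℕ}

lemma hasFDerivAt_fix_snd {F' : Type*} [NormedAddCommGroup F'] [NormedSpace ℝ F']
    {W : EuclideanSpace ℝ (Fin d) × ℝ → F'} (hW : Differentiable ℝ W)
    (x : EuclideanSpace ℝ (Fin d)) (t : ℝ) :
    HasFDerivAt (fun x' => W (x', t))
      ((fderiv ℝ W (x, t)).comp (ContinuousLinearMap.inl ℝ (EuclideanSpace ℝ (Fin d)) ℝ)) x :=
  (hW (x, t)).hasFDerivAt.comp x (hasFDerivAt_prodMk_left x t)

lemma hasDerivAt_fix_fst {F' : Type*} [NormedAddCommGroup F'] [NormedSpace ℝ F']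
    {W : EuclideanSpace ℝ (Fin d) × ℝ → F'} (hW : Differentiable ℝ W)
    (x : EuclideanSpace ℝ (Fin d)) (t : ℝ) :
    HasDerivAt (fun s => W (x, s)) (fderiv ℝ W (x, t) (0, 1)) t :=
  (hW (x, t)).hasFDerivAt.comp_hasDerivAt t ((hasDerivAt_const t x).prodMk (hasDerivAt_id t))

lemma inner_gradX (w : EuclideanSpace ℝ (Fin d) → ℝ → ℝ) (x : EuclideanSpace ℝ (Fin d))
    (t : ℝ) (v : EuclideanSpace ℝ (Fin d)) :
    ⟪gradX w x t, v⟫ = fderiv ℝ (fun x' => w x' t) x v :=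
  InnerProductSpace.toDual_symm_apply

lemma gradX_coord (w : EuclideanSpace ℝ (Fin d) → ℝ → ℝ) (x : EuclideanSpace ℝ (Fin d))
    (t : ℝ) (i : Fin d) :
    gradX w x t i = fderiv ℝ (fun x' => w x' t) x (EuclideanSpace.single i 1) := by
  rw [← inner_gradX, EuclideanSpace.inner_single_right]
  simp

lemma gradX_sub {u uh : EuclideanSpace ℝ (Fin d) → ℝ → ℝ}
    (hu : Differentiable ℝ (fun p : EuclideanSpace ℝ (Fin d) × ℝ => u p.1 p.2))
    (huh : Differentiable ℝ (fun p : EuclideanSpace ℝ (Fin d) × ℝ => uh p.1 p.2))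
    (x : EuclideanSpace ℝ (Fin d)) (t : ℝ) :
    gradX (fun x t => u x t - uh x t) x t = gradX u x t - gradX uh x t := by
  unfold gradX gradient
  rw [fderiv_fun_sub (hasFDerivAt_fix_snd hu x t).differentiableAt
    (hasFDerivAt_fix_snd huh x t).differentiableAt, map_sub]

lemma dT_sub {u uh : EuclideanSpace ℝ (Fin d) → ℝ → ℝ}
    (hu : Differentiable ℝ (fun p : EuclideanSpace ℝ (Fin d) × ℝ => u p.1 p.2))
    (huh : Differentiable ℝ (fun p : EuclideanSpace ℝ (Fin d) × ℝ => uh p.1 p.2))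
    (x : EuclideanSpace ℝ (Fin d)) (t : ℝ) :
    dT (fun x t => u x t - uh x t) x t = dT u x t - dT uh x t := by
  unfold dT
  exact deriv_fun_sub (hasDerivAt_fix_fst hu x t).differentiableAt
    (hasDerivAt_fix_fst huh x t).differentiableAt

lemma contDiff_gradX {w : EuclideanSpace ℝ (Fin d) → ℝ → ℝ} {n : WithTop ℕ∞}
    (hw : ContDiff ℝ (n + 1) (fun p : EuclideanSpace ℝ (Fin d) × ℝ => w p.1 p.2)) :
    ContDiff ℝ n (fun p : EuclideanSpace ℝ (Fin d) × ℝ => gradX w p.1 p.2) := by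
  have hdiff : Differentiable ℝ (fun p : EuclideanSpace ℝ (Fin d) × ℝ => w p.1 p.2) :=
    hw.differentiable (by simp)
  have h1 : ContDiff ℝ n (fderiv ℝ (fun p : EuclideanSpace ℝ (Fin d) × ℝ => w p.1 p.2)) :=
    hw.fderiv_right le_rfl
  have h3 : (fun p : EuclideanSpace ℝ (Fin d) × ℝ => gradX w p.1 p.2)
      = fun p => (PiLp.continuousLinearEquiv 2 ℝ (fun _ : Fin d => ℝ)).symm
          (fun j => fderiv ℝ (fun p : EuclideanSpace ℝ (Fin d) × ℝ => w p.1 p.2) p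
            ((EuclideanSpace.single j 1 : EuclideanSpace ℝ (Fin d)), 0)) := by
    funext p
    ext j
    rw [show gradX w p.1 p.2 j = fderiv ℝ (fun x' => w x' p.2) p.1 (EuclideanSpace.single j 1)
      from gradX_coord w p.1 p.2 j, (hasFDerivAt_fix_snd hdiff p.1 p.2).fderiv]
    rfl
  rw [h3]
  refine (((PiLp.continuousLinearEquiv 2 ℝ (fun _ : Fin d => ℝ)).symm :
    (Fin d → ℝ) →L[ℝ] EuclideanSpace ℝ (Fin d)).contDiff).comp ?_
  apply contDiff_pi.2
  intro j
  exact h1.clm_apply contDiff_const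

lemma dT_eq {w : EuclideanSpace ℝ (Fin d) → ℝ → ℝ}
    (hw : Differentiable ℝ (fun p : EuclideanSpace ℝ (Fin d) × ℝ => w p.1 p.2))
    (x : EuclideanSpace ℝ (Fin d)) (t : ℝ) :
    dT w x t = fderiv ℝ (fun p : EuclideanSpace ℝ (Fin d) × ℝ => w p.1 p.2) (x, t) (0, 1) :=
  (hasDerivAt_fix_fst hw x t).deriv

lemma continuous_dT {w : EuclideanSpace ℝ (Fin d) → ℝ → ℝ}
    (hw : ContDiff ℝ 1 (fun p : EuclideanSpace ℝ (Fin d) × ℝ => w p.1 p.2)) :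
    Continuous (fun p : EuclideanSpace ℝ (Fin d) × ℝ => dT w p.1 p.2) := by
  have h3 : (fun p : EuclideanSpace ℝ (Fin d) × ℝ => dT w p.1 p.2)
      = fun p => fderiv ℝ (fun p : EuclideanSpace ℝ (Fin d) × ℝ => w p.1 p.2) p (0, 1) := by
    funext p
    exact dT_eq (hw.differentiable one_ne_zero) p.1 p.2
  rw [h3]
  exact (hw.continuous_fderiv one_ne_zero).clm_apply continuous_const

lemma lapX_eq {u : EuclideanSpace ℝ (Fin d) → ℝ → ℝ}
    (hu : ContDiff ℝ 2 (fun p : EuclideanSpace ℝ (Fin d) × ℝ => u p.1 p.2))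
    (x : EuclideanSpace ℝ (Fin d)) (t : ℝ) :
    lapX u x t = ∑ i, (fderiv ℝ (fun p : EuclideanSpace ℝ (Fin d) × ℝ => gradX u p.1 p.2) (x, t))
      ((EuclideanSpace.single i 1 : EuclideanSpace ℝ (Fin d)), 0) i := by
  have hG : Differentiable ℝ (fun p : EuclideanSpace ℝ (Fin d) × ℝ => gradX u p.1 p.2) :=
    (contDiff_gradX (n := 1) (by exact_mod_cast hu)).differentiable one_ne_zero
  unfold lapX divX
  refine Finset.sum_congr rfl fun i _ => ?_
  have h1 : HasFDerivAt (fun x' => gradX u x' t i)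
      ((EuclideanSpace.proj (𝕜 := ℝ) i).comp
        ((fderiv ℝ (fun p : EuclideanSpace ℝ (Fin d) × ℝ => gradX u p.1 p.2) (x, t)).comp
          (ContinuousLinearMap.inl ℝ (EuclideanSpace ℝ (Fin d)) ℝ))) x :=
    (EuclideanSpace.proj (𝕜 := ℝ) i).hasFDerivAt.comp x (hasFDerivAt_fix_snd hG x t)
  rw [h1.fderiv]
  rfl

lemma continuous_lapX {u : EuclideanSpace ℝ (Fin d) → ℝ → ℝ}
    (hu : ContDiff ℝ 2 (fun p : EuclideanSpace ℝ (Fin d) × ℝ => u p.1 p.2)) :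
    Continuous (fun p : EuclideanSpace ℝ (Fin d) × ℝ => lapX u p.1 p.2) := by
  have h3 : (fun p : EuclideanSpace ℝ (Fin d) × ℝ => lapX u p.1 p.2)
      = fun p => ∑ i, (fderiv ℝ (fun p : EuclideanSpace ℝ (Fin d) × ℝ => gradX u p.1 p.2) p)
        ((EuclideanSpace.single i 1 : EuclideanSpace ℝ (Fin d)), 0) i := by
    funext p
    exact lapX_eq hu p.1 p.2
  rw [h3]
  apply continuous_finset_sum
  intro i _
  exact (PiLp.continuous_apply 2 (fun _ : Fin d => ℝ) i).comp
    (((contDiff_gradX (n := 1) (by exact_mod_cast hu)).continuous_fderiv one_ne_zero).clm_apply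
      continuous_const)

lemma div_product_identity {c u : EuclideanSpace ℝ (Fin d) → ℝ → ℝ}
    (hc : ContDiff ℝ 1 (fun p : EuclideanSpace ℝ (Fin d) × ℝ => c p.1 p.2))
    (hu : ContDiff ℝ 2 (fun p : EuclideanSpace ℝ (Fin d) × ℝ => u p.1 p.2))
    (x : EuclideanSpace ℝ (Fin d)) (t : ℝ) :
    ∑ i, fderiv ℝ (fun x' => (c x' t • gradX u x' t : EuclideanSpace ℝ (Fin d)) i) x
        (EuclideanSpace.single i 1)
      = ⟪gradX c x t, gradX u x t⟫ + c x t * lapX u x t := by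
  have hcd : Differentiable ℝ (fun p : EuclideanSpace ℝ (Fin d) × ℝ => c p.1 p.2) :=
    hc.differentiable one_ne_zero
  have hG : Differentiable ℝ (fun p : EuclideanSpace ℝ (Fin d) × ℝ => gradX u p.1 p.2) :=
    (contDiff_gradX (n := 1) (by exact_mod_cast hu)).differentiable one_ne_zero
  have hsum : ∀ i : Fin d,
      fderiv ℝ (fun x' => (c x' t • gradX u x' t : EuclideanSpace ℝ (Fin d)) i) x
          (EuclideanSpace.single i 1)
        = c x t * fderiv ℝ (fun x' => gradX u x' t i) x (EuclideanSpace.single i 1)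
          + gradX u x t i * gradX c x t i := by
    intro i
    have hgi : HasFDerivAt (fun x' => gradX u x' t i)
        ((EuclideanSpace.proj (𝕜 := ℝ) i).comp
          ((fderiv ℝ (fun p : EuclideanSpace ℝ (Fin d) × ℝ => gradX u p.1 p.2) (x, t)).comp
            (ContinuousLinearMap.inl ℝ (EuclideanSpace ℝ (Fin d)) ℝ))) x :=
      (EuclideanSpace.proj (𝕜 := ℝ) i).hasFDerivAt.comp x (hasFDerivAt_fix_snd hG x t)
    have hce : HasFDerivAt (fun x' => c x' t)
        ((fderiv ℝ (fun p : EuclideanSpace ℝ (Fin d) × ℝ => c p.1 p.2) (x, t)).comp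
          (ContinuousLinearMap.inl ℝ (EuclideanSpace ℝ (Fin d)) ℝ)) x :=
      hasFDerivAt_fix_snd hcd x t
    have hmul := (hce.mul hgi).fderiv
    have hfi : (fun x' => (c x' t • gradX u x' t : EuclideanSpace ℝ (Fin d)) i)
        = fun x' => c x' t * gradX u x' t i := rfl
    rw [hfi, show (fun x' => c x' t * gradX u x' t i) = (fun x' => c x' t) * (fun x' => gradX u x' t i) from rfl, hmul]
    rw [ContinuousLinearMap.add_apply, ContinuousLinearMap.smul_apply,
      ContinuousLinearMap.smul_apply, smul_eq_mul, smul_eq_mul]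
    rw [← hgi.fderiv, ← hce.fderiv, ← gradX_coord]
  rw [Finset.sum_congr rfl (fun i _ => hsum i)]
  rw [Finset.sum_add_distrib, ← Finset.mul_sum]
  have hinner : ⟪gradX c x t, gradX u x t⟫ = ∑ i, gradX u x t i * gradX c x t i := by
    rw [PiLp.inner_apply]
    exact Finset.sum_congr rfl fun i _ => by
      simp [RCLike.inner_apply, mul_comm]
  rw [hinner]
  have hlap : lapX u x t
      = ∑ i, fderiv ℝ (fun x' => gradX u x' t i) x (EuclideanSpace.single i 1) := rfl
  rw [hlap]
  ring

lemma time_ftc {w : EuclideanSpace ℝ (Fin d) → ℝ → ℝ}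
    (hw : ContDiff ℝ 1 (fun p : EuclideanSpace ℝ (Fin d) × ℝ => w p.1 p.2)) {T : ℝ} (hT : 0 < T)
    (x : EuclideanSpace ℝ (Fin d)) (h0 : w x 0 = 0) :
    ∫ t in Ioo (0:ℝ) T, dT w x t * w x t = (w x T) ^ 2 / 2 := by
  have hdiff : Differentiable ℝ (fun p : EuclideanSpace ℝ (Fin d) × ℝ => w p.1 p.2) :=
    hw.differentiable one_ne_zero
  have hder : ∀ s : ℝ, HasDerivAt (fun s => w x s) (dT w x s) s := by
    intro s
    have h := hasDerivAt_fix_fst hdiff x s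
    rwa [show dT w x s = fderiv ℝ (fun p : EuclideanSpace ℝ (Fin d) × ℝ => w p.1 p.2) (x, s) (0, 1)
      from h.deriv]
  have hcont : Continuous fun s => dT w x s * w x s := by
    have h1 : Continuous fun s : ℝ => dT w x s :=
      (continuous_dT hw).comp (continuous_const.prodMk continuous_id)
    have h2 : Continuous fun s : ℝ => w x s :=
      hw.continuous.comp (continuous_const.prodMk continuous_id)
    exact h1.mul h2
  have hq : ∀ s ∈ uIcc (0:ℝ) T, HasDerivAt (fun s => (w x s) ^ 2 / 2) (dT w x s * w x s) s := by
    intro s _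
    have := ((hder s).pow 2).div_const 2
    exact this.congr_deriv (by push_cast; ring)
  have hval : ∫ t in (0:ℝ)..T, dT w x t * w x t = (w x T) ^ 2 / 2 - (w x 0) ^ 2 / 2 :=
    intervalIntegral.integral_eq_sub_of_hasDerivAt hq (hcont.intervalIntegrable _ _)
  rw [← integral_Ioc_eq_integral_Ioo, ← intervalIntegral.integral_of_le hT.le, hval, h0]
  norm_num


end auxiliaryLemmas

/-- Identity (eq:equivalence-2): M̄ᴵᴵ(u_h,u) = (4(1+β) − 2)·‖∇x e‖²_Q, together with the
resulting two-sided bound. -/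
theorem statement14
    {d : ℕ}
    (Ω : Set (EuclideanSpace ℝ (Fin d))) (hΩ : IsOpen Ω) (hΩb : Bornology.IsBounded Ω)
    (T : ℝ) (hT : 0 < T)
    (hd : d = 1 ∨ d = 2 ∨ d = 3)
    (f u u_h : EuclideanSpace ℝ (Fin d) → ℝ → ℝ) (u0 : EuclideanSpace ℝ (Fin d) → ℝ)
    (hf : SmoothFn f)
    (hu : ContDiff ℝ 2 (fun p : EuclideanSpace ℝ (Fin d) × ℝ => u p.1 p.2))
    (huh : ContDiff ℝ 1 (fun p : EuclideanSpace ℝ (Fin d) × ℝ => u_h p.1 p.2))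
    (hheat : ∀ x ∈ Ω, ∀ t ∈ Ioo (0:ℝ) T, dT u x t - lapX u x t = f x t)
    (huB : ∀ x ∈ frontier Ω, ∀ t ∈ Ioo (0:ℝ) T, u x t = 0)
    (hu0 : ∀ x ∈ Ω, u x 0 = u0 x)
    (huhB : ∀ x ∈ frontier Ω, ∀ t ∈ Ioo (0:ℝ) T, u_h x t = 0)
    (huh0 : ∀ x ∈ Ω, u_h x 0 = u0 x)
    (β : ℝ) (hβ : 0 < β) :
    MajIIexact Ω T f u_h u β
        = (4 * (1 + β) - 2) * normQsqVec Ω T (gradX (fun x t => u x t - u_h x t))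
      ∧ normQsqVec Ω T (gradX (fun x t => u x t - u_h x t)) ≤ MajIIexact Ω T f u_h u β
      ∧ MajIIexact Ω T f u_h u β
          ≤ (4 * (1 + β) - 2) * normQsqVec Ω T (gradX (fun x t => u x t - u_h x t)) := by
  classical
  have hfc : Continuous (fun p : EuclideanSpace ℝ (Fin d) × ℝ => f p.1 p.2) := hf.continuous
  set e' : EuclideanSpace ℝ (Fin d) → ℝ → ℝ := fun x t => u x t - u_h x t with he'
  have hu1 : ContDiff ℝ 1 (fun p : EuclideanSpace ℝ (Fin d) × ℝ => u p.1 p.2) :=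
    hu.of_le (by norm_num)
  have hUe : ContDiff ℝ 1 (fun p : EuclideanSpace ℝ (Fin d) × ℝ => e' p.1 p.2) := hu1.sub huh
  have hud : Differentiable ℝ (fun p : EuclideanSpace ℝ (Fin d) × ℝ => u p.1 p.2) :=
    hu1.differentiable one_ne_zero
  have huhd : Differentiable ℝ (fun p : EuclideanSpace ℝ (Fin d) × ℝ => u_h p.1 p.2) :=
    huh.differentiable one_ne_zero
  have hGe : Continuous (fun p : EuclideanSpace ℝ (Fin d) × ℝ => gradX e' p.1 p.2) :=
    (contDiff_gradX (n := 0) (by exact_mod_cast hUe)).continuous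
  have hGh : Continuous (fun p : EuclideanSpace ℝ (Fin d) × ℝ => gradX u_h p.1 p.2) :=
    (contDiff_gradX (n := 0) (by exact_mod_cast huh)).continuous
  have hGu : Continuous (fun p : EuclideanSpace ℝ (Fin d) × ℝ => gradX u p.1 p.2) :=
    (contDiff_gradX (n := 0) (by exact_mod_cast hu1)).continuous
  have hLap : Continuous (fun p : EuclideanSpace ℝ (Fin d) × ℝ => lapX u p.1 p.2) :=
    continuous_lapX hu
  have hdTh : Continuous (fun p : EuclideanSpace ℝ (Fin d) × ℝ => dT u_h p.1 p.2) :=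
    continuous_dT huh
  have hdTe : Continuous (fun p : EuclideanSpace ℝ (Fin d) × ℝ => dT e' p.1 p.2) :=
    continuous_dT hUe
  have hec : Continuous (fun p : EuclideanSpace ℝ (Fin d) × ℝ => e' p.1 p.2) := hUe.continuous
  set P : Set (EuclideanSpace ℝ (Fin d) × ℝ) := Ω ×ˢ Ioo (0:ℝ) T with hPdef
  have hPm : MeasurableSet P := hΩ.measurableSet.prod measurableSet_Ioo
  have hPb : Bornology.IsBounded P := hΩb.prod (Metric.isBounded_Ioo 0 T)
  set g1 : EuclideanSpace ℝ (Fin d) × ℝ → ℝ :=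
    fun p => (inner ℝ (gradX u_h p.1 p.2) (gradX e' p.1 p.2) : ℝ) with hg1def
  set g2 : EuclideanSpace ℝ (Fin d) × ℝ → ℝ :=
    fun p => (dT u_h p.1 p.2 - f p.1 p.2) * e' p.1 p.2 with hg2def
  set g3 : EuclideanSpace ℝ (Fin d) × ℝ → ℝ :=
    fun p => ‖gradX e' p.1 p.2‖ ^ 2 with hg3def
  set g4 : EuclideanSpace ℝ (Fin d) × ℝ → ℝ :=
    fun p => (inner ℝ (gradX u p.1 p.2) (gradX e' p.1 p.2) : ℝ) with hg4def
  set g5 : EuclideanSpace ℝ (Fin d) × ℝ → ℝ :=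
    fun p => dT e' p.1 p.2 * e' p.1 p.2 with hg5def
  set g6 : EuclideanSpace ℝ (Fin d) × ℝ → ℝ :=
    fun p => lapX u p.1 p.2 * e' p.1 p.2 with hg6def
  have hg1c : Continuous g1 := hGh.inner hGe
  have hg2c : Continuous g2 := (hdTh.sub hfc).mul hec
  have hg3c : Continuous g3 := (hGe.norm).pow 2
  have hg4c : Continuous g4 := hGu.inner hGe
  have hg5c : Continuous g5 := hdTe.mul hec
  have hg6c : Continuous g6 := hLap.mul hec
  have hIO : ∀ g : EuclideanSpace ℝ (Fin d) × ℝ → ℝ, Continuous g → IntegrableOn g P volume :=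
    fun g hg => integrableOn_of_bounded_cont hPb hg
  have hconv1 : ∀ g : EuclideanSpace ℝ (Fin d) × ℝ → ℝ, Continuous g →
      (∫ x in Ω, ∫ t in Ioo (0:ℝ) T, g (x, t)) = ∫ p in P, g p := by
    intro g hg
    have hint : IntegrableOn g (Ω ×ˢ Ioo (0:ℝ) T)
        ((volume : Measure (EuclideanSpace ℝ (Fin d))).prod (volume : Measure ℝ)) :=
      integrableOn_of_bounded_cont hPb hg
    exact (MeasureTheory.setIntegral_prod g hint).symm
  have hconv2 : ∀ g : EuclideanSpace ℝ (Fin d) × ℝ → ℝ, Continuous g →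
      (∫ p in P, g p) = ∫ t in Ioo (0:ℝ) T, ∫ x in Ω, g (x, t) := by
    intro g hg
    have hint : Integrable g (((volume : Measure (EuclideanSpace ℝ (Fin d))).restrict Ω).prod
        ((volume : Measure ℝ).restrict (Ioo (0:ℝ) T))) := by
      rw [Measure.prod_restrict]
      exact integrableOn_of_bounded_cont hPb hg
    have h2 := MeasureTheory.integral_prod_symm g hint
    rw [Measure.prod_restrict] at h2
    exact h2
  have hA : innQvec Ω T (gradX u_h) (gradX e') = ∫ p in P, g1 p := hconv1 g1 hg1c
  have hB : innQ Ω T (fun x t => dT u_h x t - f x t) e' = ∫ p in P, g2 p := hconv1 g2 hg2c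
  have hN : normQsqVec Ω T (gradX e') = ∫ p in P, g3 p := hconv1 g3 hg3c
  -- (A) gradient decomposition
  have hAN : (∫ p in P, g1 p) + (∫ p in P, g3 p) = ∫ p in P, g4 p := by
    rw [← integral_add (hIO g1 hg1c) (hIO g3 hg3c)]
    refine setIntegral_congr_fun hPm fun p _ => ?_
    have hdecomp : gradX u p.1 p.2 = gradX u_h p.1 p.2 + gradX e' p.1 p.2 := by
      rw [show gradX e' p.1 p.2 = gradX u p.1 p.2 - gradX u_h p.1 p.2 from
        gradX_sub hud huhd p.1 p.2]
      abel
    show g1 p + g3 p = g4 p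
    simp only [hg1def, hg3def, hg4def]
    rw [hdecomp, inner_add_left, real_inner_self_eq_norm_sq]
  -- (B) use the PDE
  have hEqOn : EqOn g2 (fun p => -g5 p + g6 p) P := by
    rintro ⟨x, t⟩ hp
    have hx : x ∈ Ω := hp.1
    have ht : t ∈ Ioo (0:ℝ) T := hp.2
    show (dT u_h x t - f x t) * e' x t = -(dT e' x t * e' x t) + lapX u x t * e' x t
    have hfe : f x t = dT u x t - lapX u x t := (hheat x hx t ht).symm
    have hdte : dT e' x t = dT u x t - dT u_h x t := dT_sub hud huhd x t
    rw [hfe, hdte]; ring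
  have hBsplit : (∫ p in P, g2 p) = -(∫ p in P, g5 p) + ∫ p in P, g6 p := by
    have hg5n : Integrable (fun p => -g5 p) (volume.restrict P) := (hIO g5 hg5c).neg
    rw [setIntegral_congr_fun hPm hEqOn, integral_add hg5n (hIO g6 hg6c), integral_neg]
  -- (C) time integration
  have hg5val : (∫ p in P, g5 p) = normSTsq Ω T e' / 2 := by
    rw [← hconv1 g5 hg5c]
    have hftc : EqOn (fun x => ∫ t in Ioo (0:ℝ) T, g5 (x, t))
        (fun x => (e' x T) ^ 2 / 2) Ω := fun x hx =>
      time_ftc hUe hT x (by simp [he', hu0 x hx, huh0 x hx])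
    rw [setIntegral_congr_fun hΩ.measurableSet hftc]
    exact integral_div 2 _
  -- (D) spatial integration by parts
  have hzero : (∫ p in P, g6 p) + (∫ p in P, g4 p) = 0 := by
    rw [← integral_add (hIO g6 hg6c) (hIO g4 hg4c)]
    rw [hconv2 (fun p => g6 p + g4 p) (hg6c.add hg4c)]
    have hz : EqOn (fun t => ∫ x in Ω, (g6 (x, t) + g4 (x, t))) (fun _ => (0:ℝ))
        (Ioo (0:ℝ) T) := by
      intro t ht
      have hFt : ContDiff ℝ 1
          (fun x' => (e' x' t • gradX u x' t : EuclideanSpace ℝ (Fin d))) := by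
        have h1 : ContDiff ℝ 1 fun x' : EuclideanSpace ℝ (Fin d) => e' x' t :=
          hUe.comp (contDiff_id.prodMk contDiff_const)
        have h2 : ContDiff ℝ 1 fun x' : EuclideanSpace ℝ (Fin d) => gradX u x' t :=
          (contDiff_gradX (n := 1) (by exact_mod_cast hu)).comp
            (contDiff_id.prodMk contDiff_const)
        exact h1.smul h2
      have hF0 : ∀ x ∈ frontier Ω,
          (e' x t • gradX u x t : EuclideanSpace ℝ (Fin d)) = 0 := by
        intro x hx
        have hzero' : e' x t = 0 := by simp [he', huB x hx t ht, huhB x hx t ht]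
        rw [hzero', zero_smul]
      have hdiv := integral_div_sum_eq_zero hΩ hΩb hFt hF0
      have hpt : ∀ x : EuclideanSpace ℝ (Fin d), g6 (x, t) + g4 (x, t)
          = ∑ i, fderiv ℝ
              (fun x' => (e' x' t • gradX u x' t : EuclideanSpace ℝ (Fin d)) i) x
              (EuclideanSpace.single i 1) := by
        intro x
        rw [div_product_identity hUe hu x t]
        show lapX u x t * e' x t + (inner ℝ (gradX u x t) (gradX e' x t) : ℝ)
          = (inner ℝ (gradX e' x t) (gradX u x t) : ℝ) + e' x t * lapX u x t
        rw [real_inner_comm (gradX e' x t) (gradX u x t)]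
        ring
      show (∫ x in Ω, (g6 (x, t) + g4 (x, t))) = 0
      calc (∫ x in Ω, (g6 (x, t) + g4 (x, t)))
          = ∫ x in Ω, ∑ i, fderiv ℝ
              (fun x' => (e' x' t • gradX u x' t : EuclideanSpace ℝ (Fin d)) i) x
              (EuclideanSpace.single i 1) :=
            setIntegral_congr_fun hΩ.measurableSet (fun x _ => hpt x)
        _ = 0 := hdiv
    rw [setIntegral_congr_fun measurableSet_Ioo hz]
    simp
  have hkey : normSTsq Ω T e' + 2 * ((∫ p in P, g1 p) + (∫ p in P, g2 p))
      + 2 * (∫ p in P, g3 p) = 0 := by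
    linarith [hAN, hBsplit, hg5val, hzero]
  have hNnonneg : 0 ≤ normQsqVec Ω T (gradX e') := by
    have : (0:ℝ) ≤ ∫ x in Ω, ∫ t in Ioo (0:ℝ) T, ‖gradX e' x t‖ ^ 2 :=
      integral_nonneg fun x => integral_nonneg fun t => sq_nonneg _
    exact this
  have heq : MajIIexact Ω T f u_h u β
      = (4 * (1 + β) - 2) * normQsqVec Ω T (gradX e') := by
    show normSTsq Ω T e'
        + 2 * (innQvec Ω T (gradX u_h) (gradX e')
            + innQ Ω T (fun x t => dT u_h x t - f x t) e')
        + 4 * (1 + β) * normQsqVec Ω T (gradX e') = _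
    rw [hA, hB, hN]
    linear_combination hkey
  refine ⟨heq, ?_, le_of_eq heq⟩
  rw [heq]
  nlinarith [hNnonneg, hβ]

end
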